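/- Let A be a commutative ring, f, g ∈ A with f a nonzerodivisor, and suppose the ideal (f) defines a closed subscheme D ⊆ Spec A whose intersection with the principal open D(g) is scheme-theoretically dense in D, i.e. Ker(A → A_g/(f)) = (f). Let n ≥ 1 and consider the affine chart A' = (A[t]/(f - t g^n))/(g-torsion) of the blow-up of Spec A in the ideal (f, g^n). Then the kernel of A' → A'_g/(f A'_g) is the principal ideal generated by t; in other words, the strict transform of D in this chart is the Cartier divisor t = 0. -/

import Mathlib

set_option maxHeartbeats 1000000
set_option synthInstance.maxHeartbeats 400000


open Polynomial

/-- The ring `B = A[t]/(f - t·gⁿ)`. -/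
abbrev Stmt3.B (A : Type*) [CommRing A] (f g : A) (n : ℕ) : Type _ :=
  A[X] ⧸ Ideal.span {(C f : A[X]) - X * C g ^ n}

namespace Stmt3

variable (A : Type*) [CommRing A] (f g : A) (n : ℕ)

/-- The image of `g` in `B`. -/
noncomputable abbrev gB : B A f g n := Ideal.Quotient.mk _ (C g)

/-- The blow-up chart `A' = A[f/gⁿ] = (A[t]/(f - t·gⁿ))/(g-torsion)`; the `g`-torsion is the
kernel of the localization map `B → B_g`. -/
noncomputable abbrev A' : Type _ :=
  B A f g n ⧸ RingHom.ker (algebraMap (B A f g n) (Localization.Away (gB A f g n)))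

noncomputable instance : CommRing (A' A f g n) := Ideal.Quotient.commRing _

/-- The image of `f` in `A'`. -/
noncomputable abbrev fA' : A' A f g n := Ideal.Quotient.mk _ (Ideal.Quotient.mk _ (C f))

/-- The image of `g` in `A'`. -/
noncomputable abbrev gA' : A' A f g n := Ideal.Quotient.mk _ (gB A f g n)

/-- The image of `t` in `A'`. -/
noncomputable abbrev tA' : A' A f g n := Ideal.Quotient.mk _ (Ideal.Quotient.mk _ X)

end Stmt3

namespace Stmt3Aux
open Stmt3

variable (A : Type*) [CommRing A] (f g : A) (n : ℕ)

/-- The composite `A[X] → B → A'`. -/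
noncomputable def emb : A[X] →+* A' A f g n :=
  (Ideal.Quotient.mk _).comp (Ideal.Quotient.mk _)

lemma emb_surjective : Function.Surjective (emb A f g n) := fun x => by
  obtain ⟨b, rfl⟩ := Ideal.Quotient.mk_surjective x
  obtain ⟨p, rfl⟩ := Ideal.Quotient.mk_surjective b
  exact ⟨p, rfl⟩

lemma emb_X : emb A f g n X = tA' A f g n := rfl
lemma emb_Cf : emb A f g n (C f) = fA' A f g n := rfl
lemma emb_Cg : emb A f g n (C g) = gA' A f g n := rfl

lemma relB : (Ideal.Quotient.mk _ (C f) : B A f g n) =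
    Ideal.Quotient.mk _ X * (gB A f g n) ^ n := by
  have h : (Ideal.Quotient.mk (Ideal.span {(C f : A[X]) - X * C g ^ n}))
      ((C f : A[X]) - X * C g ^ n) = 0 :=
    Ideal.Quotient.eq_zero_iff_mem.mpr (Ideal.subset_span rfl)
  rw [map_sub, sub_eq_zero, map_mul, map_pow] at h
  exact h

lemma relA' : fA' A f g n = tA' A f g n * gA' A f g n ^ n := by
  show (Ideal.Quotient.mk _) ((Ideal.Quotient.mk _) (C f)) = _
  rw [relB, map_mul, map_pow]

/-- `A[X] → A_g`, `X ↦ f/gⁿ`. -/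
noncomputable def φ : A[X] →+* Localization.Away g :=
  eval₂RingHom (algebraMap A (Localization.Away g))
    (algebraMap A (Localization.Away g) f *
      (IsLocalization.Away.invSelf (S := Localization.Away g) g) ^ n)

lemma φ_C (a : A) : φ A f g n (C a) = algebraMap A (Localization.Away g) a := by
  simp [φ]

lemma φ_gen : φ A f g n (C f - X * C g ^ n) = 0 := by
  have h1 : algebraMap A (Localization.Away g) g *
      IsLocalization.Away.invSelf (S := Localization.Away g) g = 1 :=
    IsLocalization.Away.mul_invSelf g
  simp only [φ, map_sub, map_mul, map_pow, coe_eval₂RingHom, eval₂_C, eval₂_X]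
  ring_nf
  rw [mul_assoc, ← mul_pow, mul_comm (IsLocalization.Away.invSelf g), h1, one_pow, mul_one,
    sub_self]

noncomputable def φB : B A f g n →+* Localization.Away g :=
  Ideal.Quotient.lift _ (φ A f g n) (by
    intro a ha
    rw [Ideal.mem_span_singleton] at ha
    obtain ⟨c, rfl⟩ := ha
    rw [map_mul, φ_gen, zero_mul])

lemma φB_gB : φB A f g n (gB A f g n) = algebraMap A (Localization.Away g) g := by
  simp [φB, φ_C]

noncomputable def ψ' : A' A f g n →+* Localization.Away g :=
  Ideal.Quotient.lift _ (φB A f g n) (by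
    intro b hb
    rw [RingHom.mem_ker] at hb
    obtain ⟨⟨m, k, rfl⟩, hm⟩ :=
      (IsLocalization.map_eq_zero_iff (Submonoid.powers (gB A f g n))
        (Localization.Away (gB A f g n)) b).mp hb
    have := congrArg (φB A f g n) hm
    rw [map_mul, map_zero, map_pow, φB_gB] at this
    have hu : IsUnit ((algebraMap A (Localization.Away g) g) ^ k) :=
      (IsLocalization.Away.algebraMap_isUnit (S := Localization.Away g) g).pow k
    obtain ⟨u, hu⟩ := hu
    rw [← hu] at this
    rwa [Units.mul_right_eq_zero] at this)

lemma ψ'_emb (q : A[X]) : ψ' A f g n (emb A f g n q) = φ A f g n q := rfl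

lemma ψ'_C (a : A) : ψ' A f g n (emb A f g n (C a)) = algebraMap A (Localization.Away g) a := by
  rw [ψ'_emb, φ_C]

lemma ψ'_g : ψ' A f g n (gA' A f g n) = algebraMap A (Localization.Away g) g :=
  ψ'_C A f g n g

noncomputable def ψ : Localization.Away (gA' A f g n) →+* Localization.Away g :=
  IsLocalization.Away.lift (gA' A f g n)
    (g := ψ' A f g n)
    (by rw [ψ'_g]; exact IsLocalization.Away.algebraMap_isUnit g)

lemma ψ_algebraMap (x : A' A f g n) :
    ψ A f g n (algebraMap (A' A f g n) (Localization.Away (gA' A f g n)) x) = ψ' A f g n x :=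
  IsLocalization.Away.lift_eq _ _ _

end Stmt3Aux

open Stmt3 Stmt3Aux in
/-- Let `f, g ∈ A`, `f` a nonzerodivisor, such that
`Ker (A → A_g/(f)) = (f)` (scheme-theoretic density of `D ∩ D(g)` in `D = V(f)`), and `n ≥ 1`.
In the chart `A' = (A[t]/(f - t·gⁿ))/(g-torsion)` of the blow-up of `Spec A` in `(f, gⁿ)`,
the kernel of `A' → A'_g/(f)` is the principal ideal `(t)`: the strict transform of `D` is
the Cartier divisor `t = 0`. -/
theorem stmt3 (A : Type*) [CommRing A] (f g : A) (hf : f ∈ nonZeroDivisors A)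
    (n : ℕ) (hn : 1 ≤ n)
    (hdense : RingHom.ker ((Ideal.Quotient.mk
        (Ideal.span {algebraMap A (Localization.Away g) f})).comp
        (algebraMap A (Localization.Away g))) = Ideal.span {f}) :
    RingHom.ker ((Ideal.Quotient.mk
        (Ideal.span {algebraMap (A' A f g n) (Localization.Away (gA' A f g n))
          (fA' A f g n)})).comp
        (algebraMap (A' A f g n) (Localization.Away (gA' A f g n)))) =
      Ideal.span {tA' A f g n} := by
  set Loc := Localization.Away (gA' A f g n)
  set am := algebraMap (A' A f g n) Loc with ham
  have htk : am (tA' A f g n) ∈ Ideal.span {am (fA' A f g n)} := by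
    rw [Ideal.mem_span_singleton]
    refine ⟨(IsLocalization.Away.invSelf (S := Loc) (gA' A f g n)) ^ n, ?_⟩
    rw [relA', map_mul, map_pow, mul_assoc, ← mul_pow,
      IsLocalization.Away.mul_invSelf, one_pow, mul_one]
  apply le_antisymm
  · intro x hx
    rw [RingHom.mem_ker, RingHom.comp_apply, Ideal.Quotient.eq_zero_iff_mem] at hx
    obtain ⟨p, rfl⟩ := emb_surjective A f g n x
    have hp : emb A f g n p =
        tA' A f g n * emb A f g n (divX p) + emb A f g n (C (p.coeff 0)) := by
      conv_lhs => rw [← X_mul_divX_add p]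
      rw [map_add, map_mul, emb_X]
    rw [hp] at hx ⊢
    rw [map_add, map_mul] at hx
    have ha : am (emb A f g n (C (p.coeff 0))) ∈ Ideal.span {am (fA' A f g n)} := by
      have h2 := (Ideal.span {am (fA' A f g n)}).mul_mem_right
        (am (emb A f g n (divX p))) htk
      have h3 := (Ideal.span {am (fA' A f g n)}).sub_mem hx h2
      rwa [add_sub_cancel_left] at h3
    rw [Ideal.mem_span_singleton] at ha
    obtain ⟨c, hc⟩ := ha
    have hA : algebraMap A (Localization.Away g) (p.coeff 0) ∈
        Ideal.span {algebraMap A (Localization.Away g) f} := by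
      have h4 := congrArg (ψ A f g n) hc
      rw [map_mul, ψ_algebraMap, ψ_algebraMap, ψ'_C] at h4
      rw [Ideal.mem_span_singleton, h4,
        show (ψ' A f g n) (fA' A f g n) = algebraMap A (Localization.Away g) f from
          ψ'_C A f g n f]
      exact Dvd.intro _ rfl
    have ha' : p.coeff 0 ∈ Ideal.span {f} := by
      rw [← hdense, RingHom.mem_ker, RingHom.comp_apply, Ideal.Quotient.eq_zero_iff_mem]
      exact hA
    rw [Ideal.mem_span_singleton] at ha'
    obtain ⟨c, hc0⟩ := ha'
    rw [Ideal.mem_span_singleton]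
    refine dvd_add ⟨emb A f g n (divX p), rfl⟩ ?_
    refine ⟨gA' A f g n ^ n * emb A f g n (C c), ?_⟩
    have haC' : emb A f g n (C (p.coeff 0)) = fA' A f g n * emb A f g n (C c) := by
      rw [hc0, map_mul C, map_mul, emb_Cf]
    rw [haC', relA']
    ring
  · rw [Ideal.span_le, Set.singleton_subset_iff]
    rw [SetLike.mem_coe, RingHom.mem_ker, RingHom.comp_apply, Ideal.Quotient.eq_zero_iff_mem]
    exact htk
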